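/- Let T be a tree, let a_1, b_1, a_2, b_2 be vertices of T, let t be a vertex lying on the path in T between a_1 and b_1, and let t' be a vertex lying on the path in T between a_2 and b_2. Then there exist ā ∈ {a_1, b_1} and b̂ ∈ {a_2, b_2} such that d_T(ā, b̂) = d_T(ā, t) + d_T(t, t') + d_T(t', b̂), i.e., the path in T from ā to b̂ passes through t and then through t'. -/
import Mathlib

open SimpleGraph

/-- `mid` lies on the (unique) path between `u` and `v` in the tree `T`. -/
def OnPath {V : Type*} (T : SimpleGraph V) (u mid v : V) : Prop :=
  T.dist u mid + T.dist mid v = T.dist u v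

section Aux

variable {V : Type*} {T : SimpleGraph V}

/-- In a tree, every path between two vertices has length equal to the distance. -/
private lemma tree_path_length (hT : T.IsTree) {a b : V} (p : T.Walk a b) (hp : p.IsPath) :
    p.length = T.dist a b := by
  obtain ⟨q, hq, hlen⟩ := hT.isConnected.exists_path_of_dist a b
  obtain ⟨r, -, hu⟩ := hT.existsUnique_path a b
  rw [hu p hp, ← hu q hq, hlen]

/-- Appending two paths that only share the common endpoint gives a path. -/
private lemma append_isPath {u v w : V} {p : T.Walk u v} {q : T.Walk v w}
    (hp : p.IsPath) (hq : q.IsPath)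
    (hmeet : ∀ x ∈ p.support, x ∈ q.support → x = v) : (p.append q).IsPath := by
  rw [Walk.isPath_def, Walk.support_append]
  refine List.Nodup.append hp.support_nodup ?_ ?_
  · have := hq.support_nodup
    rw [q.support_eq_cons] at this
    exact this.of_cons
  · intro x hxp hxq
    have hv : x = v := hmeet x hxp (by rw [q.support_eq_cons]; exact List.mem_cons_of_mem _ hxq)
    subst hv
    have := hq.support_nodup
    rw [q.support_eq_cons] at this
    exact (List.nodup_cons.mp this).1 hxq

private lemma onPath_of_mem_support (hT : T.IsTree) {a b t : V} (p : T.Walk a b)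
    (hp : p.IsPath) (ht : t ∈ p.support) : OnPath T a t b := by
  classical
  have h1 : (p.takeUntil t ht).length = T.dist a t :=
    tree_path_length hT _ (hp.takeUntil ht)
  have h2 : (p.dropUntil t ht).length = T.dist t b :=
    tree_path_length hT _ (hp.dropUntil ht)
  have h3 : p.length = T.dist a b := tree_path_length hT p hp
  have := congrArg Walk.length (p.take_spec ht)
  rw [Walk.length_append, h1, h2, h3] at this
  exact this

private lemma mem_support_of_onPath (hT : T.IsTree) {a b t : V} (p : T.Walk a b)
    (hp : p.IsPath) (ht : OnPath T a t b) : t ∈ p.support := by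
  obtain ⟨pa, hpa, hla⟩ := hT.isConnected.exists_path_of_dist a t
  obtain ⟨pb, hpb, hlb⟩ := hT.isConnected.exists_path_of_dist t b
  have hlen : (pa.append pb).length = T.dist a b := by
    rw [Walk.length_append, hla, hlb]; exact ht
  have hpath : (pa.append pb).IsPath := (pa.append pb).isPath_of_length_eq_dist hlen
  obtain ⟨r, -, hu⟩ := hT.existsUnique_path a b
  have : p = pa.append pb := by rw [hu p hp, hu _ hpath]
  rw [this, Walk.mem_support_append_iff]
  left; exact pa.end_mem_support

/-- Along a walk from `w` to `a`, there is a first vertex in a set containing `a`;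
we get a walk from `w` to it meeting the set only at that vertex. -/
private lemma exists_first_meet (S : Set V) {w a : V} (r : T.Walk w a) (ha : a ∈ S) :
    ∃ (m : V) (q : T.Walk w m), m ∈ S ∧ ∀ x ∈ q.support, x ∈ S → x = m := by
  classical
  induction r with
  | nil => exact ⟨_, Walk.nil, ha, by simp⟩
  | @cons x y z h r ih =>
    by_cases hu : x ∈ S
    · exact ⟨x, Walk.nil, hu, by simp⟩
    · obtain ⟨m, q, hm, hq⟩ := ih ha
      refine ⟨m, Walk.cons h q, hm, ?_⟩
      intro x hx hxS
      rw [Walk.support_cons, List.mem_cons] at hx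
      rcases hx with rfl | hx
      · exact absurd hxS hu
      · exact hq x hx hxS

/-- Median lemma: for any `a b w` in a tree there is a vertex `m` on all three paths. -/
private lemma exists_median (hT : T.IsTree) (a b w : V) :
    ∃ m : V, T.dist a m + T.dist m b = T.dist a b ∧
      T.dist w m + T.dist m a = T.dist w a ∧
      T.dist w m + T.dist m b = T.dist w b := by
  classical
  obtain ⟨p, hp, -⟩ := hT.isConnected.exists_path_of_dist a b
  obtain ⟨r⟩ := hT.isConnected.preconnected w a
  obtain ⟨m, q, hm, hq⟩ := exists_first_meet {x | x ∈ p.support} r p.start_mem_support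
  -- replace q by a path
  set qb := q.bypass with hqb
  have hqbp : qb.IsPath := q.bypass_isPath
  have hqmeet : ∀ x ∈ qb.support, x ∈ p.support → x = m := fun x hx hxp =>
    hq x (q.support_bypass_subset hx) hxp
  have hontree : OnPath T a m b := onPath_of_mem_support hT p hp hm
  -- path from w to b through m
  have hpath1 : (qb.append (p.dropUntil m hm)).IsPath := by
    refine append_isPath hqbp (hp.dropUntil hm) ?_
    exact fun x hx hxd => hqmeet x hx (p.support_dropUntil_subset hm hxd)
  have hpath2 : (qb.append (p.takeUntil m hm).reverse).IsPath := by
    refine append_isPath hqbp ((hp.takeUntil hm).reverse) ?_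
    intro x hx hxd
    rw [Walk.support_reverse, List.mem_reverse] at hxd
    exact hqmeet x hx (p.support_takeUntil_subset hm hxd)
  have l1 : qb.length = T.dist w m := tree_path_length hT qb hqbp
  have l2 : (p.dropUntil m hm).length = T.dist m b :=
    tree_path_length hT _ (hp.dropUntil hm)
  have l3 : (p.takeUntil m hm).length = T.dist a m :=
    tree_path_length hT _ (hp.takeUntil hm)
  have e1 : T.dist w m + T.dist m b = T.dist w b := by
    have := tree_path_length hT _ hpath1
    rwa [Walk.length_append, l1, l2] at this
  have e2 : T.dist w m + T.dist m a = T.dist w a := by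
    have h := tree_path_length hT _ hpath2
    rw [Walk.length_append, Walk.length_reverse, l1, l3] at h
    rw [show T.dist m a = T.dist a m from dist_comm]
    exact h
  exact ⟨m, hontree, e2, e1⟩

/-- If `t` is on the path from `a` to `b`, then for any `w`, `t` is on the path from
`a` to `w` or on the path from `b` to `w`. -/
private lemma onPath_trans (hT : T.IsTree) {a b t : V} (ht : OnPath T a t b) (w : V) :
    OnPath T a t w ∨ OnPath T b t w := by
  classical
  obtain ⟨m, hm1, hm2, hm3⟩ := exists_median hT a b w
  obtain ⟨p, hp, -⟩ := hT.isConnected.exists_path_of_dist a b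
  have htp : t ∈ p.support := mem_support_of_onPath hT p hp ht
  have hmp : m ∈ p.support := mem_support_of_onPath hT p hp hm1
  have hsplit : t ∈ (p.takeUntil m hmp).support ∨ t ∈ (p.dropUntil m hmp).support := by
    rw [← Walk.mem_support_append_iff, p.take_spec hmp]; exact htp
  have tri1 : T.dist t w ≤ T.dist t m + T.dist m w := hT.isConnected.dist_triangle
  rcases hsplit with hcase | hcase
  · left
    have h1 : OnPath T a t m :=
      onPath_of_mem_support hT _ (hp.takeUntil hmp) hcase
    unfold OnPath at *
    have tri2 : T.dist a w ≤ T.dist a t + T.dist t w := hT.isConnected.dist_triangle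
    have c1 : T.dist a w = T.dist w a := dist_comm
    have c2 : T.dist m a = T.dist a m := dist_comm
    have c3 : T.dist m w = T.dist w m := dist_comm
    omega
  · right
    have h1 : OnPath T m t b :=
      onPath_of_mem_support hT _ (hp.dropUntil hmp) hcase
    unfold OnPath at *
    have tri2 : T.dist b w ≤ T.dist b t + T.dist t w := hT.isConnected.dist_triangle
    have c1 : T.dist b w = T.dist w b := dist_comm
    have c2 : T.dist m t = T.dist t m := dist_comm
    have c3 : T.dist m w = T.dist w m := dist_comm
    have c4 : T.dist b t = T.dist t b := dist_comm
    omega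

end Aux

/-- If `t` lies on the path between `a₁` and `b₁` and `t'` lies on the
path between `a₂` and `b₂` in a tree `T`, then there are `ā ∈ {a₁, b₁}` and
`b̂ ∈ {a₂, b₂}` with `d_T(ā, b̂) = d_T(ā, t) + d_T(t, t') + d_T(t', b̂)`. -/
theorem stmt_6 {V : Type*} [Fintype V] (T : SimpleGraph V) (hT : T.IsTree)
    (a₁ b₁ a₂ b₂ t t' : V)
    (ht : OnPath T a₁ t b₁) (ht' : OnPath T a₂ t' b₂) :
    ∃ abar ∈ ({a₁, b₁} : Set V), ∃ bhat ∈ ({a₂, b₂} : Set V),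
      T.dist abar bhat = T.dist abar t + T.dist t t' + T.dist t' bhat := by
  have step1 : ∃ abar ∈ ({a₁, b₁} : Set V), OnPath T abar t t' := by
    rcases onPath_trans hT ht t' with h | h
    · exact ⟨a₁, Or.inl rfl, h⟩
    · exact ⟨b₁, Or.inr rfl, h⟩
  obtain ⟨abar, habar, hab⟩ := step1
  have step2 : ∃ bhat ∈ ({a₂, b₂} : Set V), OnPath T bhat t' abar := by
    rcases onPath_trans hT ht' abar with h | h
    · exact ⟨a₂, Or.inl rfl, h⟩
    · exact ⟨b₂, Or.inr rfl, h⟩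
  obtain ⟨bhat, hbhat, hbb⟩ := step2
  refine ⟨abar, habar, bhat, hbhat, ?_⟩
  unfold OnPath at hab hbb
  have c1 : T.dist abar bhat = T.dist bhat abar := dist_comm
  have c2 : T.dist t' abar = T.dist abar t' := dist_comm
  have c3 : T.dist t' bhat = T.dist bhat t' := dist_comm
  omega
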